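/- With σ_i = τ/(n+1) − ξ_{i-1} + ξ_i (ξ_0 = ξ_{n+1} = 0, all σ_i > 0), the value χ determined by the sl_{n+1} critical point equations satisfies χ^{n+1} = τ^{n+1} / ∏_{i=1}^{n+1} σ_i. -/

import Mathlib

private lemma sum_shift' (f : ℕ → ℝ) : ∀ m : ℕ,
    ∑ i ∈ Finset.Icc 1 (m+1), f i = f 1 + ∑ i ∈ Finset.Icc 1 m, f (i+1) := by
  intro m
  induction m with
  | zero => simp
  | succ k ih =>
    rw [Finset.sum_Icc_succ_top (by omega), ih,
      Finset.sum_Icc_succ_top (by omega : 1 ≤ k+1)]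
    ring

private lemma sum_tele' (g : ℕ → ℝ) : ∀ m : ℕ,
    ∑ i ∈ Finset.Icc 1 m, (g i - g (i-1)) = g m - g 0 := by
  intro m
  induction m with
  | zero => simp
  | succ k ih =>
    rw [Finset.sum_Icc_succ_top (by omega), ih]
    simp only [Nat.add_sub_cancel]
    ring

private lemma prod_tele' (w : ℕ → ℝ) (hw : ∀ i, w i ≠ 0) : ∀ m : ℕ,
    ∏ i ∈ Finset.Icc 1 m, ((w (i-1))⁻¹ * w i) = (w 0)⁻¹ * w m := by
  intro m
  induction m with
  | zero => simp [inv_mul_cancel₀ (hw 0)]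
  | succ k ih =>
    rw [Finset.prod_Icc_succ_top (by omega), ih]
    simp only [Nat.add_sub_cancel]
    rw [show (w 0)⁻¹ * w k * ((w k)⁻¹ * w (k+1))
        = (w 0)⁻¹ * (w k * (w k)⁻¹) * w (k+1) from by ring,
      mul_inv_cancel₀ (hw k), mul_one]

/-- With `σ_i = τ/(n+1) − ξ_{i-1} + ξ_i` (`ξ_0 = ξ_{n+1} = 0`, all
`σ_i > 0`), the value `χ` determined by the `sl_{n+1}` critical point equations satisfies
`χ^{n+1} = τ^{n+1} / ∏_{i=1}^{n+1} σ_i`. -/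
theorem stmt_8 (n : ℕ) (hn : 2 ≤ n) (τ χ : ℝ) (hτ : 0 < τ) (hχ : 0 < χ)
    (ξ z σ : ℕ → ℝ) (hξ0 : ξ 0 = 0) (hξtop : ξ (n+1) = 0)
    (hσdef : ∀ i, σ i = τ / (n+1) - ξ (i-1) + ξ i)
    (hσ : ∀ i ∈ Finset.Icc 1 (n+1), 0 < σ i)
    (hz : ∀ i ∈ Finset.Icc 1 n, 0 < z i)
    (eq1 : z 1 - (z 1)⁻¹ * z 2 = χ / τ * (2 * ξ 1 - ξ 2))
    (eqmid : ∀ i, 2 ≤ i → i ≤ n - 1 →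
      (z (i-1))⁻¹ * z i - (z i)⁻¹ * z (i+1) = χ / τ * (-ξ (i-1) + 2 * ξ i - ξ (i+1)))
    (eqlast : (z (n-1))⁻¹ * z n - (z n)⁻¹ = χ / τ * (-ξ (n-1) + 2 * ξ n))
    (eqchi : χ = z 1 + (∑ i ∈ Finset.Icc 1 (n-1), (z i)⁻¹ * z (i+1)) + (z n)⁻¹) :
    χ ^ (n+1) = τ ^ (n+1) / ∏ i ∈ Finset.Icc 1 (n+1), σ i := by
  obtain ⟨m, rfl⟩ : ∃ m, n = m + 2 := ⟨n - 2, by omega⟩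
  clear hn
  have hτ' : τ ≠ 0 := ne_of_gt hτ
  set w : ℕ → ℝ := fun i => if 1 ≤ i ∧ i ≤ m + 2 then z i else 1 with hw
  have hwpos : ∀ i, 0 < w i := by
    intro i
    simp only [hw]
    split
    · exact hz i (Finset.mem_Icc.mpr (by omega))
    · exact one_pos
  have hwne : ∀ i, w i ≠ 0 := fun i => ne_of_gt (hwpos i)
  set t : ℕ → ℝ := fun i => (w (i-1))⁻¹ * w i with ht
  have hw0 : w 0 = 1 := by simp [hw]
  have hwtop : w (m+3) = 1 := by simp [hw]
  have hwz : ∀ i, 1 ≤ i → i ≤ m+2 → w i = z i := by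
    intro i h1 h2; simp [hw, h1, h2]
  have t1 : t 1 = z 1 := by
    simp only [ht]
    rw [show (1:ℕ)-1 = 0 from rfl, hw0, hwz 1 (by omega) (by omega)]
    simp
  have tmid : ∀ i, 2 ≤ i → i ≤ m+2 → t i = (z (i-1))⁻¹ * z i := by
    intro i h1 h2
    simp only [ht]
    rw [hwz i (by omega) h2, hwz (i-1) (by omega) (by omega)]
  have ttop : t (m+3) = (z (m+2))⁻¹ := by
    simp only [ht]
    rw [show m+3-1 = m+2 from rfl, hwtop, hwz (m+2) (by omega) le_rfl, mul_one]
  -- key difference equations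
  have key : ∀ i, 1 ≤ i → i ≤ m+2 → t i - t (i+1) = χ / τ * (σ i - σ (i+1)) := by
    intro i h1 h2
    by_cases hi1 : i = 1
    · subst hi1
      rw [t1, tmid 2 (by omega) (by omega), hσdef 1, hσdef 2]
      rw [show (1:ℕ)-1 = 0 from rfl, show (2:ℕ)-1 = 1 from rfl, hξ0]
      linear_combination eq1
    · by_cases hi2 : i = m+2
      · subst hi2
        rw [tmid (m+2) (by omega) le_rfl, show m+2+1 = m+3 from rfl, ttop,
          hσdef (m+2), hσdef (m+3)]
        rw [show m+3-1 = m+2 from rfl, show m+2-1 = m+1 from rfl,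
          show ξ (m+3) = 0 from hξtop]
        have := eqlast
        rw [show m+2-1 = m+1 from rfl] at this
        linear_combination this
      · have h1' : 2 ≤ i := by omega
        have h2' : i ≤ m+1 := by omega
        have heq := eqmid i h1' (by omega)
        rw [tmid i h1' (by omega), tmid (i+1) (by omega) (by omega),
          hσdef i, hσdef (i+1)]
        rw [show i+1-1 = i from rfl]
        linear_combination heq
  -- t i - (χ/τ) σ i is constant
  have const : ∀ i, 1 ≤ i → i ≤ m+3 → t i - χ/τ * σ i = t 1 - χ/τ * σ 1 := by
    intro i
    induction i with
    | zero => omega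
    | succ k ih =>
      intro h1 h2
      by_cases hk : k = 0
      · subst hk; norm_num
      · have hk1 : 1 ≤ k := by omega
        have h3 := key k hk1 (by omega)
        have h4 := ih hk1 (by omega)
        linarith
  -- sum of σ
  have sumσ : ∑ i ∈ Finset.Icc 1 (m+3), σ i = τ := by
    have hcongr : ∀ i ∈ Finset.Icc 1 (m+3), σ i = τ/((m:ℝ)+3) + (ξ i - ξ (i-1)) := by
      intro i _
      rw [hσdef i]
      push_cast
      ring
    rw [Finset.sum_congr rfl hcongr, Finset.sum_add_distrib, sum_tele' ξ (m+3),
      Finset.sum_const, Nat.card_Icc, hξ0, show ξ (m+3) = 0 from hξtop]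
    have h3 : ((m:ℝ)+3) ≠ 0 := by positivity
    rw [nsmul_eq_mul]
    push_cast
    field_simp
    ring
  -- sum of t equals χ
  have hsum_t : ∑ i ∈ Finset.Icc 1 (m+3), t i = χ := by
    rw [show m+3 = (m+2)+1 from rfl, Finset.sum_Icc_succ_top (by omega),
      sum_shift' t (m+1)]
    have hcongr : ∀ i ∈ Finset.Icc 1 (m+1), t (i+1) = (z i)⁻¹ * z (i+1) := by
      intro i hi
      rw [Finset.mem_Icc] at hi
      rw [tmid (i+1) (by omega) (by omega), show i+1-1 = i from rfl]
    rw [Finset.sum_congr rfl hcongr, t1, show m+2+1 = m+3 from rfl, ttop]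
    rw [show m+2-1 = m+1 from rfl] at eqchi
    linarith [eqchi]
  -- the constant is zero
  have hc0 : t 1 - χ/τ * σ 1 = 0 := by
    have h1 : ∑ i ∈ Finset.Icc 1 (m+3), t i
        = ∑ i ∈ Finset.Icc 1 (m+3), ((t 1 - χ/τ * σ 1) + χ/τ * σ i) := by
      refine Finset.sum_congr rfl fun i hi => ?_
      rw [Finset.mem_Icc] at hi
      have := const i hi.1 hi.2
      linarith
    rw [hsum_t, Finset.sum_add_distrib, Finset.sum_const, Nat.card_Icc,
      ← Finset.mul_sum, sumσ] at h1
    have h2 : χ / τ * τ = χ := by field_simp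
    rw [h2] at h1
    have h3 : ((m+3+1-1 : ℕ) : ℝ) * (t 1 - χ/τ * σ 1) = 0 := by
      rw [nsmul_eq_mul] at h1
      linarith
    have h4 : ((m+3+1-1 : ℕ) : ℝ) ≠ 0 := by
      push_cast [show m+3+1-1 = m+3 from rfl]
      positivity
    exact (mul_eq_zero.mp h3).resolve_left h4
  have tval : ∀ i ∈ Finset.Icc 1 (m+3), t i = χ/τ * σ i := by
    intro i hi
    rw [Finset.mem_Icc] at hi
    have := const i hi.1 hi.2
    linarith
  -- telescoping product
  have hprod1 : ∏ i ∈ Finset.Icc 1 (m+3), t i = 1 := by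
    simp only [ht]
    rw [prod_tele' w hwne (m+3), hw0, hwtop]
    simp
  have hprod2 : ∏ i ∈ Finset.Icc 1 (m+3), t i
      = (χ/τ)^(m+3) * ∏ i ∈ Finset.Icc 1 (m+3), σ i := by
    rw [Finset.prod_congr rfl tval, Finset.prod_mul_distrib, Finset.prod_const,
      Nat.card_Icc, show m+3+1-1 = m+3 from rfl]
  have hP : (0:ℝ) < ∏ i ∈ Finset.Icc 1 (m+3), σ i :=
    Finset.prod_pos (fun i hi => hσ i hi)
  have hPne : (∏ i ∈ Finset.Icc 1 (m+3), σ i) ≠ 0 := ne_of_gt hP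
  have hfin : (χ/τ)^(m+3) * ∏ i ∈ Finset.Icc 1 (m+3), σ i = 1 := by
    rw [← hprod2, hprod1]
  rw [div_pow] at hfin
  show χ ^ (m+3) = τ ^ (m+3) / ∏ i ∈ Finset.Icc 1 (m+3), σ i
  have hτp : τ ^ (m+3) ≠ 0 := pow_ne_zero _ hτ'
  field_simp at hfin
  rw [eq_div_iff hPne]
  exact hfin
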